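/- arXiv:2104.00803 — 8 statements merged into one kernel-verified Lean document; each statement's English description precedes it below -/
import Mathlib

section
/- Let e* ∈ E. There exist an assignment Π containing e* with w_{e*} = max_{e∈Π} w_e and an exclusive set S for e* with w_{e*} ≤ w_e for every e ∈ S, if and only if e* is a bottleneck edge. Moreover, whenever an assignment Π containing e* satisfies w_{e*} = max_{e∈Π} w_e and some exclusive set S for e* satisfies w_{e*} ≤ w_e for every e ∈ S, the assignment Π is a bottleneck assignment. -/
/-!
Setting: a finite bipartite graph with vertex sets `V₁`, `V₂` (modelled as two
disjoint types), edge set `E ⊆ V₁ × V₂` and edge weights `w : V₁ × V₂ → ℝ`.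
-/

/-- `M` is an assignment on the edge set `E`: every vertex of `V₂` is incident
to exactly one edge of `M` and every vertex of `V₁` to at most one. -/
def IsAssignment {V₁ V₂ : Type*} (E M : Finset (V₁ × V₂)) : Prop :=
  M ⊆ E ∧ (∀ j : V₂, ∃! e, e ∈ M ∧ e.2 = j) ∧
    ∀ e ∈ M, ∀ e' ∈ M, e.1 = e'.1 → e = e'

/-- `e` is a maximum-weight edge of `M`. -/
def IsMaxEdge {V₁ V₂ : Type*} (w : V₁ × V₂ → ℝ) (M : Finset (V₁ × V₂))
    (e : V₁ × V₂) : Prop :=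
  e ∈ M ∧ ∀ e' ∈ M, w e' ≤ w e

/-- `M` is a bottleneck assignment: it is an assignment whose maximum edge
weight is at most the maximum edge weight of any other assignment. -/
def IsBottleneck {V₁ V₂ : Type*} (w : V₁ × V₂ → ℝ) (E M : Finset (V₁ × V₂)) : Prop :=
  IsAssignment E M ∧
    ∀ M', IsAssignment E M' → ∀ e ∈ M, ∃ e' ∈ M', w e ≤ w e'

/-- `e` is a bottleneck edge: a maximum-weight edge of some bottleneck assignment. -/
def IsBottleneckEdge {V₁ V₂ : Type*} (w : V₁ × V₂ → ℝ) (E : Finset (V₁ × V₂))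
    (e : V₁ × V₂) : Prop :=
  ∃ M, IsBottleneck w E M ∧ IsMaxEdge w M e

/-- `S` is an exclusive set for the edge `estar`. -/
def IsExclusive {V₁ V₂ : Type*} (E : Finset (V₁ × V₂)) (estar : V₁ × V₂)
    (S : Finset (V₁ × V₂)) : Prop :=
  S ⊆ E ∧ estar ∉ S ∧ ∀ M, IsAssignment E M → estar ∈ M ∨ ∃ e ∈ S, e ∈ M

lemma key_bottleneck {V₁ V₂ : Type*} (E : Finset (V₁ × V₂)) (w : V₁ × V₂ → ℝ)
    (estar : V₁ × V₂) (M S : Finset (V₁ × V₂))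
    (hM : IsAssignment E M) (hmax : IsMaxEdge w M estar)
    (hS : IsExclusive E estar S) (hwS : ∀ e ∈ S, w estar ≤ w e) :
    IsBottleneck w E M := by
  refine ⟨hM, fun M' hM' e heM => ?_⟩
  rcases hS.2.2 M' hM' with h | ⟨f, hfS, hfM⟩
  · exact ⟨estar, h, hmax.2 e heM⟩
  · exact ⟨f, hfM, le_trans (hmax.2 e heM) (hwS f hfS)⟩

theorem stmt0 {V₁ V₂ : Type*} [Fintype V₁] [Fintype V₂] [Nonempty V₁] [Nonempty V₂]
    (hcard : Fintype.card V₂ ≤ Fintype.card V₁)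
    (E : Finset (V₁ × V₂)) (w : V₁ × V₂ → ℝ)
    (hex : ∃ M, IsAssignment E M)
    (estar : V₁ × V₂) (he : estar ∈ E) :
    ((∃ M, IsAssignment E M ∧ IsMaxEdge w M estar ∧
        ∃ S, IsExclusive E estar S ∧ ∀ e ∈ S, w estar ≤ w e) ↔
      IsBottleneckEdge w E estar) ∧
    (∀ M S, IsAssignment E M → IsMaxEdge w M estar →
      IsExclusive E estar S → (∀ e ∈ S, w estar ≤ w e) →
      IsBottleneck w E M) := by
  classical
  refine ⟨⟨?_, ?_⟩, fun M S hM hmax hS hwS => key_bottleneck E w estar M S hM hmax hS hwS⟩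
  · rintro ⟨M, hM, hmax, S, hS, hwS⟩
    exact ⟨M, key_bottleneck E w estar M S hM hmax hS hwS, hmax⟩
  · rintro ⟨M, ⟨hMa, hMb⟩, hmax⟩
    refine ⟨M, hMa, hmax, (E.filter fun e => w estar ≤ w e) \ {estar}, ⟨?_, ?_, ?_⟩, ?_⟩
    · exact Finset.sdiff_subset.trans (Finset.filter_subset _ _)
    · simp
    · intro M' hM'
      by_contra hc
      push_neg at hc
      obtain ⟨h1, h2⟩ := hc
      obtain ⟨e', he'M', hle⟩ := hMb M' hM' estar hmax.1
      refine h2 e' ?_ he'M'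
      simp only [Finset.mem_sdiff, Finset.mem_filter, Finset.mem_singleton]
      exact ⟨⟨hM'.1 he'M', hle⟩, fun h => h1 (h ▸ he'M')⟩
    · intro e heS
      simp only [Finset.mem_sdiff, Finset.mem_filter] at heS
      exact heS.1.2
end

section
/- If e* ∈ E is a bottleneck edge, then the set S := {e ∈ E : e ≠ e* and w_e ≥ w_{e*}} is an exclusive set for e*, and there exists an assignment Π containing e* with w_{e*} = max_{e∈Π} w_e. -/
theorem stmt1 {V₁ V₂ : Type*} [Fintype V₁] [Fintype V₂] [Nonempty V₁] [Nonempty V₂]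
    [DecidableEq V₁] [DecidableEq V₂]
    (hcard : Fintype.card V₂ ≤ Fintype.card V₁)
    (E : Finset (V₁ × V₂)) (w : V₁ × V₂ → ℝ)
    (hex : ∃ M, IsAssignment E M)
    (estar : V₁ × V₂) (he : estar ∈ E)
    (hbn : IsBottleneckEdge w E estar) :
    IsExclusive E estar (E.filter (fun e => e ≠ estar ∧ w estar ≤ w e)) ∧
    ∃ M, IsAssignment E M ∧ IsMaxEdge w M estar := by
  obtain ⟨M, ⟨hMa, hMbn⟩, hMmax⟩ := hbn
  refine ⟨⟨Finset.filter_subset _ _, ?_, ?_⟩, M, hMa, hMmax⟩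
  · simp [Finset.mem_filter]
  · intro M' hM'
    by_contra h
    push_neg at h
    obtain ⟨hst, hno⟩ := h
    obtain ⟨e', he'M, hle⟩ := hMbn M' hM' estar hMmax.1
    have := hno e' (Finset.mem_filter.mpr ⟨hM'.1 he'M, ?_, hle⟩)
    · exact this he'M
    · rintro rfl; exact hst he'M
end

section
/- Let e* ∈ E, let Π be an assignment containing e* with w_{e*} = max_{e∈Π} w_e, and let S be an exclusive set for e* with w_{e*} ≤ w_e for every e ∈ S. Then Π is a bottleneck assignment and e* is a bottleneck edge. -/
theorem stmt2 {V₁ V₂ : Type*} [Fintype V₁] [Fintype V₂] [Nonempty V₁] [Nonempty V₂]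
    (hcard : Fintype.card V₂ ≤ Fintype.card V₁)
    (E : Finset (V₁ × V₂)) (w : V₁ × V₂ → ℝ)
    (hex : ∃ M, IsAssignment E M)
    (estar : V₁ × V₂) (he : estar ∈ E)
    (M : Finset (V₁ × V₂)) (hM : IsAssignment E M)
    (hmax : IsMaxEdge w M estar)
    (S : Finset (V₁ × V₂)) (hS : IsExclusive E estar S)
    (hle : ∀ e ∈ S, w estar ≤ w e) :
    IsBottleneck w E M ∧ IsBottleneckEdge w E estar := by
  have hbot : IsBottleneck w E M := by
    refine ⟨hM, fun M' hM' e heM => ?_⟩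
    have hwe : w e ≤ w estar := hmax.2 e heM
    rcases hS.2.2 M' hM' with h | ⟨e', he'S, he'M⟩
    · exact ⟨estar, h, hwe⟩
    · exact ⟨e', he'M, hwe.trans (hle e' he'S)⟩
  exact ⟨hbot, M, hbot, hmax⟩
end

section
/- Let e* ∈ E be a bottleneck edge of w and let λ̲, λ̄ : E → ℝ with λ̲_e ≥ 0 and λ̄_e ≥ 0 for every e ∈ E. Then the following are equivalent: (i) for every perturbation P with −λ̲_e ≤ P(e) ≤ λ̄_e for all e ∈ E, the edge e* is a bottleneck edge of the perturbed weights w + P; (ii) there exist an assignment Π containing e* and an exclusive set S for e* such that w_{e*} − λ̲_{e*} ≥ w_e + λ̄_e for every e ∈ Π \ {e*} and w_{e*} + λ̄_{e*} ≤ w_e − λ̲_e for every e ∈ S. -/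
theorem stmt4 {V₁ V₂ : Type*} [Fintype V₁] [Fintype V₂] [Nonempty V₁] [Nonempty V₂]
    (hcard : Fintype.card V₂ ≤ Fintype.card V₁)
    (E : Finset (V₁ × V₂)) (w : V₁ × V₂ → ℝ)
    (hex : ∃ M, IsAssignment E M)
    (estar : V₁ × V₂) (he : estar ∈ E)
    (hbn : IsBottleneckEdge w E estar)
    (lo hi : V₁ × V₂ → ℝ)
    (hlo : ∀ e ∈ E, 0 ≤ lo e) (hhi : ∀ e ∈ E, 0 ≤ hi e) :
    (∀ P : V₁ × V₂ → ℝ, (∀ e ∈ E, -lo e ≤ P e ∧ P e ≤ hi e) →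
        IsBottleneckEdge (fun e => w e + P e) E estar) ↔
    (∃ M S, IsAssignment E M ∧ estar ∈ M ∧ IsExclusive E estar S ∧
        (∀ e ∈ M, e ≠ estar → w e + hi e ≤ w estar - lo estar) ∧
        (∀ e ∈ S, w estar + hi estar ≤ w e - lo e)) := by
  classical
  constructor
  · intro h
    have h0 := h (fun e => if e = estar then -lo estar else hi e) (by
      intro e heE
      by_cases hee : e = estar
      · rw [hee]
        simp only [eq_self_iff_true, if_true]
        exact ⟨le_refl _, by have := hlo estar he; have := hhi estar he; linarith⟩
      · simp only [if_neg hee]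
        exact ⟨by have := hlo e heE; have := hhi e heE; linarith, le_refl _⟩)
    have h1 := h (fun e => if e = estar then hi estar else -lo e) (by
      intro e heE
      by_cases hee : e = estar
      · rw [hee]
        simp only [eq_self_iff_true, if_true]
        exact ⟨by have := hlo estar he; have := hhi estar he; linarith, le_refl _⟩
      · simp only [if_neg hee]
        exact ⟨le_refl _, by have := hlo e heE; have := hhi e heE; linarith⟩)
    obtain ⟨M, ⟨hMass, hMbot⟩, hMstar, hMmax⟩ := h0
    obtain ⟨M₁, ⟨hM₁ass, hM₁bot⟩, hM₁star, hM₁max⟩ := h1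
    refine ⟨M, E.filter (fun e => e ≠ estar ∧ w estar + hi estar ≤ w e - lo e),
      hMass, hMstar, ⟨Finset.filter_subset _ _, ?_, ?_⟩, ?_, ?_⟩
    · intro hmem
      exact ((Finset.mem_filter.mp hmem).2.1) rfl
    · intro M' hM'
      by_cases hstar : estar ∈ M'
      · exact Or.inl hstar
      · right
        obtain ⟨e', he'M', he'le⟩ := hM₁bot M' hM' estar hM₁star
        have hne : e' ≠ estar := fun hc => hstar (hc ▸ he'M')
        simp only [eq_self_iff_true, if_true, if_neg hne] at he'le
        refine ⟨e', Finset.mem_filter.mpr ⟨hM'.1 he'M', hne, by linarith⟩, he'M'⟩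
    · intro e heM hne
      have := hMmax e heM
      simp only [eq_self_iff_true, if_true, if_neg hne] at this
      linarith
    · intro e heS
      exact (Finset.mem_filter.mp heS).2.2
  · rintro ⟨M, S, hM, heM, ⟨hSE, heS, hSex⟩, hMw, hSw⟩
    intro P hP
    have hPstar := hP estar (hM.1 heM)
    have hmax : ∀ e ∈ M, w e + P e ≤ w estar + P estar := by
      intro e heMm
      by_cases hee : e = estar
      · rw [hee]
      · have hPe := hP e (hM.1 heMm)
        have := hMw e heMm hee
        linarith
    refine ⟨M, ⟨hM, ?_⟩, heM, hmax⟩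
    intro M' hM' e heMm
    by_cases hstar : estar ∈ M'
    · exact ⟨estar, hstar, hmax e heMm⟩
    · obtain ⟨e₀, he₀S, he₀M'⟩ := (hSex M' hM').resolve_left hstar
      have hPe₀ := hP e₀ (hSE he₀S)
      have h1 := hSw e₀ he₀S
      have h2 := hmax e heMm
      refine ⟨e₀, he₀M', ?_⟩
      show w e + P e ≤ w e₀ + P e₀
      linarith
end

section
/- Let Π be an assignment and let λ̲, λ̄ : E → ℝ with λ̲_e ≥ 0 and λ̄_e ≥ 0 for every e ∈ E. Then the following are equivalent: (i) for every perturbation P with −λ̲_e ≤ P(e) ≤ λ̄_e for all e ∈ E, the assignment Π is a bottleneck assignment of the perturbed weights w + P; (ii) for every e ∈ Π there exists an exclusive set S_e for e such that w_e + λ̄_e ≤ w_{e'} − λ̲_{e'} for every e' ∈ S_e. -/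
theorem stmt5 {V₁ V₂ : Type*} [Fintype V₁] [Fintype V₂] [Nonempty V₁] [Nonempty V₂]
    (hcard : Fintype.card V₂ ≤ Fintype.card V₁)
    (E : Finset (V₁ × V₂)) (w : V₁ × V₂ → ℝ)
    (hex : ∃ M, IsAssignment E M)
    (M : Finset (V₁ × V₂)) (hM : IsAssignment E M)
    (lo hi : V₁ × V₂ → ℝ)
    (hlo : ∀ e ∈ E, 0 ≤ lo e) (hhi : ∀ e ∈ E, 0 ≤ hi e) :
    (∀ P : V₁ × V₂ → ℝ, (∀ e ∈ E, -lo e ≤ P e ∧ P e ≤ hi e) →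
        IsBottleneck (fun e => w e + P e) E M) ↔
    (∀ e ∈ M, ∃ S, IsExclusive E e S ∧
        ∀ e' ∈ S, w e + hi e ≤ w e' - lo e') := by
  constructor
  · intro h e he
    classical
    refine ⟨E.filter (fun e' => e' ≠ e ∧ w e + hi e ≤ w e' - lo e'),
      ⟨Finset.filter_subset _ _, by simp, ?_⟩, ?_⟩
    · intro M' hM'
      by_cases heM' : e ∈ M'
      · exact Or.inl heM'
      · right
        set P := fun e'' => if e'' = e then hi e else -lo e'' with hPdef
        have hP : ∀ e'' ∈ E, -lo e'' ≤ P e'' ∧ P e'' ≤ hi e'' := by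
          intro e'' hE
          by_cases h'' : e'' = e
          · subst h''
            have h1 := hlo e'' hE
            have h2 := hhi e'' hE
            simp [hPdef]
            linarith
          · have h1 := hlo e'' hE
            have h2 := hhi e'' hE
            simp [hPdef, h'']
            linarith
        obtain ⟨e', he'M', hle⟩ := (h P hP).2 M' hM' e he
        have hne : e' ≠ e := fun hh => heM' (hh ▸ he'M')
        have he'E : e' ∈ E := hM'.1 he'M'
        refine ⟨e', Finset.mem_filter.mpr ⟨he'E, hne, ?_⟩, he'M'⟩
        simp only [hPdef, if_pos rfl, if_neg hne] at hle
        linarith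
    · intro e' he'
      exact (Finset.mem_filter.mp he').2.2
  · intro h P hP
    refine ⟨hM, ?_⟩
    intro M' hM' e he
    obtain ⟨S, ⟨hSE, heS, hexc⟩, hineq⟩ := h e he
    rcases hexc M' hM' with heM' | ⟨e', he'S, he'M'⟩
    · exact ⟨e, heM', le_refl _⟩
    · refine ⟨e', he'M', ?_⟩
      have h1 := (hP e (hM.1 he)).2
      have h2 := (hP e' (hSE he'S)).1
      have h3 := hineq e' he'S
      simp only []
      linarith
end

section
/- Let e* ∈ E, let Π be an assignment containing e* with w_{e*} = max_{e∈Π} w_e and Π \ {e*} nonempty, and let S be a nonempty exclusive set for e* with w_{e*} ≤ w_e for every e ∈ S. Define λ̄* := min_{e∈S} (w_e − w_{e*})/2 and λ̲* := min_{e∈Π\{e*}} (w_{e*} − w_e)/2. Then for every perturbation P : E → ℝ satisfying −λ̲* ≤ P(e*) ≤ λ̄*, P(e) ≥ w_{e*} + λ̄* − w_e for every e ∈ S, and P(e) ≤ w_{e*} − λ̲* − w_e for every e ∈ Π \ {e*} (with P unrestricted on all other edges), the edge e* is a bottleneck edge of the perturbed weights w + P and Π is a bottleneck assignment of w + P. 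-/
theorem stmt6 {V₁ V₂ : Type*} [Fintype V₁] [Fintype V₂] [Nonempty V₁] [Nonempty V₂]
    [DecidableEq V₁] [DecidableEq V₂]
    (hcard : Fintype.card V₂ ≤ Fintype.card V₁)
    (E : Finset (V₁ × V₂)) (w : V₁ × V₂ → ℝ)
    (hex : ∃ M, IsAssignment E M)
    (estar : V₁ × V₂) (he : estar ∈ E)
    (M : Finset (V₁ × V₂)) (hM : IsAssignment E M)
    (hmax : IsMaxEdge w M estar) (hMne : (M.erase estar).Nonempty)
    (S : Finset (V₁ × V₂)) (hSne : S.Nonempty)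
    (hS : IsExclusive E estar S) (hle : ∀ e ∈ S, w estar ≤ w e) :
    ∀ P : V₁ × V₂ → ℝ,
      -((M.erase estar).inf' hMne (fun e => (w estar - w e) / 2)) ≤ P estar →
      P estar ≤ S.inf' hSne (fun e => (w e - w estar) / 2) →
      (∀ e ∈ S, w estar + S.inf' hSne (fun e' => (w e' - w estar) / 2) - w e ≤ P e) →
      (∀ e ∈ M, e ≠ estar →
        P e ≤ w estar - (M.erase estar).inf' hMne (fun e' => (w estar - w e') / 2) - w e) →
      IsBottleneckEdge (fun e => w e + P e) E estar ∧
        IsBottleneck (fun e => w e + P e) E M := by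
  intro P h1 h2 h3 h4
  have hmaxe : ∀ e ∈ M, w e + P e ≤ w estar + P estar := by
    intro e heM
    by_cases hee : e = estar
    · subst hee; exact le_refl _
    · have h4' := h4 e heM hee
      linarith
  have hkey : ∀ M', IsAssignment E M' → ∃ e' ∈ M', w estar + P estar ≤ w e' + P e' := by
    intro M' hM'
    rcases hS.2.2 M' hM' with h | ⟨e, heS, heM'⟩
    · exact ⟨estar, h, le_refl _⟩
    · refine ⟨e, heM', ?_⟩
      have h3' := h3 e heS
      linarith
  have hbot : IsBottleneck (fun e => w e + P e) E M := by
    refine ⟨hM, fun M' hM' e heM => ?_⟩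
    obtain ⟨e', he', hle'⟩ := hkey M' hM'
    exact ⟨e', he', le_trans (hmaxe e heM) hle'⟩
  exact ⟨⟨M, hbot, hmax.1, hmaxe⟩, hbot⟩
end

section
/- Let e* ∈ E, let Π be an assignment containing e* with Π \ {e*} nonempty, and let S be a nonempty exclusive set for e*. Suppose λ̲, λ̄ : E → ℝ are nonnegative bounds satisfying w_{e*} + λ̄_{e*} ≤ w_e − λ̲_e for every e ∈ S and w_{e*} − λ̲_{e*} ≥ w_e + λ̄_e for every e ∈ Π \ {e*}. Then min(λ̄_{e*}, min_{e∈S} λ̲_e) ≤ min_{e∈S} (w_e − w_{e*})/2 and min(λ̲_{e*}, min_{e∈Π\{e*}} λ̄_e) ≤ min_{e∈Π\{e*}} (w_{e*} − w_e)/2. -/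
theorem stmt7 {V₁ V₂ : Type*} [Fintype V₁] [Fintype V₂] [Nonempty V₁] [Nonempty V₂]
    [DecidableEq V₁] [DecidableEq V₂]
    (hcard : Fintype.card V₂ ≤ Fintype.card V₁)
    (E : Finset (V₁ × V₂)) (w : V₁ × V₂ → ℝ)
    (hex : ∃ M, IsAssignment E M)
    (estar : V₁ × V₂) (he : estar ∈ E)
    (M : Finset (V₁ × V₂)) (hM : IsAssignment E M) (heM : estar ∈ M)
    (hMne : (M.erase estar).Nonempty)
    (S : Finset (V₁ × V₂)) (hSne : S.Nonempty) (hS : IsExclusive E estar S)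
    (lo hi : V₁ × V₂ → ℝ)
    (hlo : ∀ e ∈ E, 0 ≤ lo e) (hhi : ∀ e ∈ E, 0 ≤ hi e)
    (hSbnd : ∀ e ∈ S, w estar + hi estar ≤ w e - lo e)
    (hMbnd : ∀ e ∈ M, e ≠ estar → w e + hi e ≤ w estar - lo estar) :
    min (hi estar) (S.inf' hSne lo) ≤ S.inf' hSne (fun e => (w e - w estar) / 2) ∧
    min (lo estar) ((M.erase estar).inf' hMne hi) ≤
      (M.erase estar).inf' hMne (fun e => (w estar - w e) / 2) := by
  constructor
  · apply Finset.le_inf'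
    intro e heS
    have h1 : w estar + hi estar ≤ w e - lo e := hSbnd e heS
    have h2 : S.inf' hSne lo ≤ lo e := Finset.inf'_le _ heS
    have h3 : min (hi estar) (S.inf' hSne lo) ≤ hi estar := min_le_left _ _
    have h4 : min (hi estar) (S.inf' hSne lo) ≤ lo e := le_trans (min_le_right _ _) h2
    linarith
  · apply Finset.le_inf'
    intro e heM
    have heM' := Finset.mem_erase.mp heM
    have h1 : w e + hi e ≤ w estar - lo estar := hMbnd e heM'.2 heM'.1
    have h2 : (M.erase estar).inf' hMne hi ≤ hi e := Finset.inf'_le _ heM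
    have h3 : min (lo estar) ((M.erase estar).inf' hMne hi) ≤ lo estar := min_le_left _ _
    have h4 : min (lo estar) ((M.erase estar).inf' hMne hi) ≤ hi e :=
      le_trans (min_le_right _ _) h2
    linarith
end

section
/- Let e* ∈ E be a bottleneck edge, let Π be an assignment containing e* with w_{e*} = max_{e∈Π} w_e and Π \ {e*} nonempty, and suppose the set S := {e ∈ E : e ≠ e* and w_e ≥ w_{e*}} is nonempty. Define σ := min( min_{e∈S} (w_e − w_{e*})/2 , min_{e∈Π\{e*}} (w_{e*} − w_e)/2 ). Then σ ≥ 0, and for every perturbation P : E → ℝ with |P(e)| ≤ σ for all e ∈ E, the edge e* is a bottleneck edge of the perturbed weights w + P and Π is a bottleneck assignment of w + P. -/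
theorem stmt10 {V₁ V₂ : Type*} [Fintype V₁] [Fintype V₂] [Nonempty V₁] [Nonempty V₂]
    [DecidableEq V₁] [DecidableEq V₂]
    (hcard : Fintype.card V₂ ≤ Fintype.card V₁)
    (E : Finset (V₁ × V₂)) (w : V₁ × V₂ → ℝ)
    (hex : ∃ M, IsAssignment E M)
    (estar : V₁ × V₂) (he : estar ∈ E)
    (hbn : IsBottleneckEdge w E estar)
    (M : Finset (V₁ × V₂)) (hM : IsAssignment E M)
    (hmax : IsMaxEdge w M estar) (hMne : (M.erase estar).Nonempty)
    (hSne : (E.filter fun e => e ≠ estar ∧ w estar ≤ w e).Nonempty) :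
    0 ≤ min ((E.filter fun e => e ≠ estar ∧ w estar ≤ w e).inf' hSne
          fun e => (w e - w estar) / 2)
        ((M.erase estar).inf' hMne fun e => (w estar - w e) / 2) ∧
    ∀ P : V₁ × V₂ → ℝ,
      (∀ e ∈ E, |P e| ≤
        min ((E.filter fun e' => e' ≠ estar ∧ w estar ≤ w e').inf' hSne
            fun e' => (w e' - w estar) / 2)
          ((M.erase estar).inf' hMne fun e' => (w estar - w e') / 2)) →
      IsBottleneckEdge (fun e => w e + P e) E estar ∧
        IsBottleneck (fun e => w e + P e) E M := by
  set σ := min ((E.filter fun e => e ≠ estar ∧ w estar ≤ w e).inf' hSne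
          fun e => (w e - w estar) / 2)
        ((M.erase estar).inf' hMne fun e => (w estar - w e) / 2) with hσdef
  have hσ1 : ∀ e ∈ E.filter fun e => e ≠ estar ∧ w estar ≤ w e,
      w estar + 2 * σ ≤ w e := by
    intro e heS
    have h1 : σ ≤ (w e - w estar) / 2 :=
      le_trans (min_le_left _ _) (Finset.inf'_le _ heS)
    linarith
  have hσ2 : ∀ e ∈ M.erase estar, w e + 2 * σ ≤ w estar := by
    intro e heM
    have h1 : σ ≤ (w estar - w e) / 2 :=
      le_trans (min_le_right _ _) (Finset.inf'_le _ heM)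
    linarith
  have hσ0 : 0 ≤ σ := by
    refine le_min (Finset.le_inf' _ _ fun e heS => ?_) (Finset.le_inf' _ _ fun e heM => ?_)
    · have := (Finset.mem_filter.mp heS).2.2; linarith
    · have := hmax.2 e (Finset.mem_of_mem_erase heM); linarith
  refine ⟨hσ0, fun P hP => ?_⟩
  have hPb : ∀ e ∈ E, -σ ≤ P e ∧ P e ≤ σ := fun e heE => abs_le.mp (hP e heE)
  have hmax' : IsMaxEdge (fun e => w e + P e) M estar := by
    refine ⟨hmax.1, fun e' he' => ?_⟩
    by_cases h : e' = estar
    · subst h; exact le_refl _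
    · have heM : e' ∈ M.erase estar := Finset.mem_erase.mpr ⟨h, he'⟩
      have h1 := hσ2 e' heM
      have h2 := (hPb e' (hM.1 he')).2
      have h3 := (hPb estar (hM.1 hmax.1)).1
      show w e' + P e' ≤ w estar + P estar
      linarith
  have hbot : IsBottleneck (fun e => w e + P e) E M := by
    refine ⟨hM, fun M' hM' e heM => ?_⟩
    obtain ⟨M₀, hM₀b, hM₀max⟩ := hbn
    obtain ⟨e', he'M', hle⟩ := hM₀b.2 M' hM' estar hM₀max.1
    refine ⟨e', he'M', le_trans (hmax'.2 e heM) ?_⟩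
    by_cases h : e' = estar
    · subst h; exact le_refl _
    · have heS : e' ∈ E.filter fun e => e ≠ estar ∧ w estar ≤ w e :=
        Finset.mem_filter.mpr ⟨hM'.1 he'M', h, hle⟩
      have h1 := hσ1 e' heS
      have h2 := (hPb estar he).2
      have h3 := (hPb e' (hM'.1 he'M')).1
      show w estar + P estar ≤ w e' + P e'
      linarith
  exact ⟨⟨M, hbot, hmax'⟩, hbot⟩
end
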